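/- With R_P = ((1+ω)/2)I₄ + ((1-ω)/2)P for 4×4 Pauli tensor products P and ω = e^{iπ/4}, the identity R_{IX}·R_{IZ}·R_{IX}·R_{ZX}·R_{ZZ}·R_{ZX} = R_{ZX}·R_{IZ}·R_{IX}·R_{ZX}·R_{ZZ}·R_{IX} holds. -/

import Mathlib

set_option maxHeartbeats 8000000

open Matrix Kronecker

noncomputable def ω : ℂ := Complex.exp (Real.pi * Complex.I / 4)

def X : Matrix (Fin 2) (Fin 2) ℂ := !![0, 1; 1, 0]
def Y : Matrix (Fin 2) (Fin 2) ℂ := !![0, -Complex.I; Complex.I, 0]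
def Z : Matrix (Fin 2) (Fin 2) ℂ := !![1, 0; 0, -1]
def Id2 : Matrix (Fin 2) (Fin 2) ℂ := 1

def E0 : Matrix (Fin 2) (Fin 2) ℂ := !![1, 0; 0, 0]
def E1 : Matrix (Fin 2) (Fin 2) ℂ := !![0, 0; 0, 1]

lemma blockmul (A B C D : Matrix (Fin 2) (Fin 2) ℂ) :
    (E0 ⊗ₖ A + E1 ⊗ₖ B) * (E0 ⊗ₖ C + E1 ⊗ₖ D) = E0 ⊗ₖ (A * C) + E1 ⊗ₖ (B * D) := by
  have h00 : E0 * E0 = E0 := by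
    ext i j; fin_cases i <;> fin_cases j <;> simp [E0, E1, Matrix.mul_apply, Fin.sum_univ_two]
  have h01 : E0 * E1 = 0 := by
    ext i j; fin_cases i <;> fin_cases j <;> simp [E0, E1, Matrix.mul_apply, Fin.sum_univ_two]
  have h10 : E1 * E0 = 0 := by
    ext i j; fin_cases i <;> fin_cases j <;> simp [E0, E1, Matrix.mul_apply, Fin.sum_univ_two]
  have h11 : E1 * E1 = E1 := by
    ext i j; fin_cases i <;> fin_cases j <;> simp [E0, E1, Matrix.mul_apply, Fin.sum_univ_two]
  rw [add_mul, mul_add, mul_add]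
  simp only [← Matrix.mul_kronecker_mul, h00, h01, h10, h11, Matrix.zero_kronecker]
  abel

lemma decompI (w : ℂ) (M : Matrix (Fin 2) (Fin 2) ℂ) :
    ((1 + w) / 2) • (1 : Matrix (Fin 2 × Fin 2) (Fin 2 × Fin 2) ℂ) + ((1 - w) / 2) • (Id2 ⊗ₖ M)
      = E0 ⊗ₖ (((1 + w) / 2) • 1 + ((1 - w) / 2) • M)
        + E1 ⊗ₖ (((1 + w) / 2) • 1 + ((1 - w) / 2) • M) := by
  ext ⟨i, j⟩ ⟨k, l⟩
  fin_cases i <;> fin_cases k <;>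
    simp [E0, E1, Id2, Matrix.one_apply, Prod.ext_iff]

lemma decompZ (w : ℂ) (M : Matrix (Fin 2) (Fin 2) ℂ) :
    ((1 + w) / 2) • (1 : Matrix (Fin 2 × Fin 2) (Fin 2 × Fin 2) ℂ) + ((1 - w) / 2) • (Z ⊗ₖ M)
      = E0 ⊗ₖ (((1 + w) / 2) • 1 + ((1 - w) / 2) • M)
        + E1 ⊗ₖ (((1 + w) / 2) • 1 + (-((1 - w) / 2)) • M) := by
  ext ⟨i, j⟩ ⟨k, l⟩
  fin_cases i <;> fin_cases k <;>
    simp [E0, E1, Z, Matrix.one_apply, Prod.ext_iff]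

lemma key2x2 (a b : ℂ) :
    (a • 1 + b • X) * (a • 1 + b • Z) * (a • 1 + b • X) * (a • 1 + (-b) • X) *
        (a • 1 + (-b) • Z) * (a • 1 + (-b) • X)
      = (a • 1 + (-b) • X) * (a • 1 + b • Z) * (a • 1 + b • X) * (a • 1 + (-b) • X) *
        (a • 1 + (-b) • Z) * (a • 1 + b • X) := by
  ext i j
  fin_cases i <;> fin_cases j <;>
    (simp [X, Z, Matrix.mul_apply, Matrix.one_apply, Fin.sum_univ_two]; ring)

/-- The 45-degree Pauli rotation associated to a 4×4 matrix `P`. -/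
noncomputable def R (P : Matrix (Fin 2 × Fin 2) (Fin 2 × Fin 2) ℂ) :
    Matrix (Fin 2 × Fin 2) (Fin 2 × Fin 2) ℂ :=
  ((1 + ω) / 2) • (1 : Matrix (Fin 2 × Fin 2) (Fin 2 × Fin 2) ℂ) + ((1 - ω) / 2) • P

theorem nonobvious_relation_two :
    R (Id2 ⊗ₖ X) * R (Id2 ⊗ₖ Z) * R (Id2 ⊗ₖ X) * R (Z ⊗ₖ X) * R (Z ⊗ₖ Z) * R (Z ⊗ₖ X) =
      R (Z ⊗ₖ X) * R (Id2 ⊗ₖ Z) * R (Id2 ⊗ₖ X) * R (Z ⊗ₖ X) * R (Z ⊗ₖ Z) * R (Id2 ⊗ₖ X) := by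
  unfold R
  generalize ω = w
  rw [decompI w X, decompI w Z, decompZ w X, decompZ w Z]
  simp only [blockmul]
  refine (add_right_inj _).mpr ?_
  exact congrArg _ (key2x2 ((1 + w) / 2) ((1 - w) / 2))
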